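/- Let X be a real linear n-normed space, W a subspace, and x₀ ∈ X with d := inf_{x ∈ W} ‖x₀ - x, b₂, ..., bₙ‖ > 0. Define T₁ on the subspace W₀ = W + span{x₀} by T₁(y + α x₀, b₂, ..., bₙ) = α. Then T₁ is a well-defined bounded b-linear functional on W₀ × ⟨b₂⟩ × ... × ⟨bₙ⟩ with norm ‖T₁‖ = 1/d. -/
import Mathlib


open Function Filter Topology

/-- An `n`-norm on a real vector space `X` (axioms N1-N4). -/
structure NNorm (n : ℕ) (X : Type*) [AddCommGroup X] [Module ℝ X] where
  toFun : (Fin n → X) → ℝ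
  eq_zero_iff : ∀ v : Fin n → X, toFun v = 0 ↔ ¬ LinearIndependent ℝ v
  perm_invariant : ∀ (σ : Equiv.Perm (Fin n)) (v : Fin n → X), toFun (v ∘ σ) = toFun v
  smul_eq : ∀ (α : ℝ) (v : Fin n → X) (i : Fin n),
      toFun (Function.update v i (α • v i)) = |α| * toFun v
  add_le : ∀ (v : Fin n → X) (i : Fin n) (x y : X),
      toFun (Function.update v i (x + y)) ≤
        toFun (Function.update v i x) + toFun (Function.update v i y)

variable {n : ℕ} {X : Type*} [AddCommGroup X] [Module ℝ X]

/-- The seminorm `x ↦ ‖x, b₂, …, bₙ‖` obtained by fixing the vectors `b` in all slots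
but the first. -/
noncomputable def bsem (N : NNorm (n + 1) X) (b : Fin (n + 1) → X) (x : X) : ℝ :=
  N.toFun (Function.update b 0 x)

section Generic

variable {V : Type*} [AddCommGroup V] [Module ℝ V]

/-- A `b`-linear functional: additive and homogeneous in its first argument. -/
def IsBLinear (T : V → ℝ) : Prop :=
  (∀ x y : V, T (x + y) = T x + T y) ∧ ∀ (k : ℝ) (x : V), T (k • x) = k * T x

/-- A bounded `b`-linear functional with respect to a seminorm `p`. -/
def IsBddBLinearP (p : V → ℝ) (T : V → ℝ) : Prop :=
  IsBLinear T ∧ ∃ M > 0, ∀ x : V, |T x| ≤ M * p x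

/-- The norm of a bounded `b`-linear functional with respect to a seminorm `p`. -/
noncomputable def bnormP (p : V → ℝ) (T : V → ℝ) : ℝ :=
  sInf {M : ℝ | 0 < M ∧ ∀ x : V, |T x| ≤ M * p x}

end Generic

/-- A bounded `b`-linear functional on `X × ⟨b₂⟩ × ⋯ × ⟨bₙ⟩`. -/
def IsBddBLinear (N : NNorm (n + 1) X) (b : Fin (n + 1) → X) (T : X → ℝ) : Prop :=
  IsBddBLinearP (bsem N b) T

/-- The norm of a bounded `b`-linear functional on `X × ⟨b₂⟩ × ⋯ × ⟨bₙ⟩`. -/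
noncomputable def bnorm (N : NNorm (n + 1) X) (b : Fin (n + 1) → X) (T : X → ℝ) : ℝ :=
  bnormP (bsem N b) T

/-- Convergence of a sequence in a linear `n`-normed space. -/
def NConv (N : NNorm (n + 1) X) (u : ℕ → X) (x : X) : Prop :=
  ∀ v : Fin (n + 1) → X,
    Tendsto (fun k => N.toFun (Function.update v 0 (u k - x))) atTop (nhds 0)

/-- A subspace is closed if it contains all limits of its convergent sequences. -/
def IsClosedSub (N : NNorm (n + 1) X) (W : Submodule ℝ X) : Prop :=
  ∀ u : ℕ → X, (∀ k, u k ∈ W) → ∀ x : X, NConv N u x → x ∈ W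

/-- `b`-weak convergence of a sequence. -/
def BWeakConv (N : NNorm (n + 1) X) (b : Fin (n + 1) → X) (u : ℕ → X) (x : X) : Prop :=
  ∀ T : X → ℝ, IsBddBLinear N b T →
    Tendsto (fun k => T (u k)) atTop (nhds (T x))

lemma bsem_zero (N : NNorm (n + 1) X) (b : Fin (n + 1) → X) : bsem N b 0 = 0 := by
  rw [bsem, N.eq_zero_iff]
  intro h
  exact h.ne_zero 0 (by simp)

lemma bsem_smul (N : NNorm (n + 1) X) (b : Fin (n + 1) → X) (α : ℝ) (x : X) :
    bsem N b (α • x) = |α| * bsem N b x := by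
  have h := N.smul_eq α (Function.update b 0 x) 0
  simpa [bsem, Function.update_idem] using h

lemma bsem_add_le (N : NNorm (n + 1) X) (b : Fin (n + 1) → X) (x y : X) :
    bsem N b (x + y) ≤ bsem N b x + bsem N b y :=
  N.add_le b 0 x y

lemma bsem_nonneg (N : NNorm (n + 1) X) (b : Fin (n + 1) → X) (x : X) :
    0 ≤ bsem N b x := by
  have h := bsem_add_le N b x (-x)
  have h2 : bsem N b (-x) = bsem N b x := by
    have := bsem_smul N b (-1) x
    simpa using this
  have h0 : bsem N b (x + -x) = 0 := by
    simpa using bsem_zero N b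
  rw [h0, h2] at h
  linarith

theorem stmt16 (N : NNorm (n + 1) X) (b : Fin (n + 1) → X)
    (hdim : ↑(n + 1) ≤ Module.rank ℝ X) (W : Submodule ℝ X) (x₀ : X) (d : ℝ)
    (hdinf : d = sInf ((fun w => bsem N b (x₀ - w)) '' (W : Set X))) (hd : 0 < d) :
    ∃ T₁ : ↥(W ⊔ Submodule.span ℝ {x₀}) → ℝ,
      (∀ (y : X) (hy : y ∈ W) (α : ℝ),
        T₁ ⟨y + α • x₀,
          Submodule.add_mem_sup hy
            (Submodule.smul_mem _ α (Submodule.mem_span_singleton_self x₀))⟩ = α) ∧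
      IsBddBLinearP (fun z : ↥(W ⊔ Submodule.span ℝ {x₀}) => bsem N b (z : X)) T₁ ∧
      bnormP (fun z : ↥(W ⊔ Submodule.span ℝ {x₀}) => bsem N b (z : X)) T₁ = 1 / d := by
  set S : Set ℝ := (fun w => bsem N b (x₀ - w)) '' (W : Set X) with hS
  have hSbdd : BddBelow S := ⟨0, by rintro s ⟨w, _, rfl⟩; exact bsem_nonneg N b _⟩
  have hSne : S.Nonempty := ⟨bsem N b (x₀ - 0), 0, W.zero_mem, rfl⟩
  -- x₀ ∉ W
  have hx₀ : x₀ ∉ W := by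
    intro hmem
    have h0 : (0 : ℝ) ∈ S := ⟨x₀, hmem, by simp [bsem_zero]⟩
    have := csInf_le hSbdd h0
    rw [← hdinf] at this
    linarith
  -- uniqueness of the coefficient α
  have huniq : ∀ (α α' : ℝ) (y y' : X), y ∈ W → y' ∈ W →
      y + α • x₀ = y' + α' • x₀ → α = α' := by
    intro α α' y y' hy hy' heq
    by_contra hne
    have hmem : (α - α') • x₀ ∈ W := by
      have h2 : (α - α') • x₀ = y' - y := by
        rw [sub_smul, sub_eq_sub_iff_add_eq_add, add_comm]
        exact heq
      rw [h2]; exact W.sub_mem hy' hy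
    have : x₀ ∈ W := by
      have := W.smul_mem (α - α')⁻¹ hmem
      rwa [smul_smul, inv_mul_cancel₀ (sub_ne_zero.mpr hne), one_smul] at this
    exact hx₀ this
  -- representation
  have hrep : ∀ z : ↥(W ⊔ Submodule.span ℝ {x₀}),
      ∃ α : ℝ, ∃ y ∈ W, (z : X) = y + α • x₀ := by
    rintro ⟨z, hz⟩
    rw [Submodule.mem_sup] at hz
    obtain ⟨y, hy, u, hu, rfl⟩ := hz
    rw [Submodule.mem_span_singleton] at hu
    obtain ⟨α, rfl⟩ := hu
    exact ⟨α, y, hy, rfl⟩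
  set T₁ : ↥(W ⊔ Submodule.span ℝ {x₀}) → ℝ := fun z => (hrep z).choose with hT₁
  have hspec : ∀ z : ↥(W ⊔ Submodule.span ℝ {x₀}), ∃ y ∈ W, (z : X) = y + (T₁ z) • x₀ :=
    fun z => (hrep z).choose_spec
  have hval : ∀ (z : ↥(W ⊔ Submodule.span ℝ {x₀})) (α : ℝ) (y : X), y ∈ W →
      (z : X) = y + α • x₀ → T₁ z = α := by
    intro z α y hy heq
    obtain ⟨y', hy', heq'⟩ := hspec z
    exact huniq _ _ y' y hy' hy (heq' ▸ heq)
  -- key estimate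
  have hkey : ∀ z : ↥(W ⊔ Submodule.span ℝ {x₀}), d * |T₁ z| ≤ bsem N b (z : X) := by
    intro z
    obtain ⟨y, hy, heq⟩ := hspec z
    set α := T₁ z
    rcases eq_or_ne α 0 with h0 | h0
    · rw [h0]; simpa using bsem_nonneg N b (z : X)
    · have hz : (z : X) = α • (x₀ - (-(α⁻¹ • y))) := by
        rw [heq, smul_sub, smul_neg, smul_smul, mul_inv_cancel₀ h0, one_smul, sub_neg_eq_add,
          add_comm]
      have hmemS : bsem N b (x₀ - (-(α⁻¹ • y))) ∈ S :=
        ⟨-(α⁻¹ • y), W.neg_mem (W.smul_mem _ hy), rfl⟩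
      have hge : d ≤ bsem N b (x₀ - (-(α⁻¹ • y))) := hdinf ▸ csInf_le hSbdd hmemS
      calc d * |α| ≤ bsem N b (x₀ - (-(α⁻¹ • y))) * |α| :=
            mul_le_mul_of_nonneg_right hge (abs_nonneg α)
        _ = bsem N b ((z : X)) := by rw [hz, bsem_smul]; ring
  have hbound : ∀ z : ↥(W ⊔ Submodule.span ℝ {x₀}), |T₁ z| ≤ (1 / d) * bsem N b (z : X) := by
    intro z
    rw [one_div, inv_mul_eq_div, le_div_iff₀ hd]
    have := hkey z
    linarith [mul_comm |T₁ z| d]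
  -- linearity
  have hlin : IsBLinear T₁ := by
    constructor
    · intro z z'
      obtain ⟨y, hy, heq⟩ := hspec z
      obtain ⟨y', hy', heq'⟩ := hspec z'
      refine hval (z + z') (T₁ z + T₁ z') (y + y') (W.add_mem hy hy') ?_
      push_cast
      rw [heq, heq', add_smul]; abel
    · intro k z
      obtain ⟨y, hy, heq⟩ := hspec z
      refine hval (k • z) (k * T₁ z) (k • y) (W.smul_mem k hy) ?_
      push_cast
      rw [heq, smul_add, smul_smul]
  refine ⟨T₁, ?_, ⟨hlin, 1 / d, by positivity, hbound⟩, ?_⟩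
  · intro y hy α
    exact hval _ α y hy rfl
  · -- norm equals 1/d
    set M := {M : ℝ | 0 < M ∧ ∀ z : ↥(W ⊔ Submodule.span ℝ {x₀}), |T₁ z| ≤ M * bsem N b (z : X)}
      with hM
    have hMne : M.Nonempty := ⟨1 / d, by positivity, hbound⟩
    have hMbdd : BddBelow M := ⟨0, fun m hm => le_of_lt hm.1⟩
    have hle : ∀ m ∈ M, 1 / d ≤ m := by
      rintro m ⟨hm0, hmb⟩
      have hdm : 1 / m ≤ d := by
        rw [hdinf]
        refine le_csInf hSne ?_
        rintro s ⟨w, hw, rfl⟩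
        have hmemW₀ : x₀ - w ∈ W ⊔ Submodule.span ℝ {x₀} := by
          have : x₀ - w = -w + (1:ℝ) • x₀ := by rw [one_smul]; abel
          rw [this]
          exact Submodule.add_mem_sup (W.neg_mem hw)
            (Submodule.smul_mem _ 1 (Submodule.mem_span_singleton_self x₀))
        have h1 : T₁ ⟨x₀ - w, hmemW₀⟩ = 1 := by
          refine hval _ 1 (-w) (W.neg_mem hw) ?_
          rw [one_smul]; show x₀ - w = -w + x₀; abel
        have hb := hmb ⟨x₀ - w, hmemW₀⟩
        rw [h1, abs_one] at hb
        show 1 / m ≤ bsem N b (x₀ - w)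
        rw [div_le_iff₀ hm0]
        have hb' : 1 ≤ m * bsem N b (x₀ - w) := by simpa using hb
        linarith [mul_comm m (bsem N b (x₀ - w))]
      rw [div_le_iff₀ hd]
      rw [div_le_iff₀ hm0] at hdm
      linarith [mul_comm d m]
    exact le_antisymm (csInf_le hMbdd ⟨by positivity, hbound⟩) (le_csInf hMne hle)
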